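/- With notation as above, the full derivative criterion for the phase function: the critical set of Φ(x, ξ, g) = (κ(gx) − κ(x))·ξ on T*U × G equals {(x, ξ, g) : g·(x, ξ) = (x, ξ) and 𝕁(x, ξ) = 0}, i.e. Crit(Φ) = {(x, ξ, g) ∈ (Ξ ∩ T*U) × G : g·(x, ξ) = (x, ξ)}, where Ξ = 𝕁^{-1}(0) is the zero level of the momentum map. -/

import Mathlib

open Matrix

/-!
STATEMENT 10: The critical set of the phase function `Φ(x, ξ, g) = (κ(gx) − κ(x))·ξ` equals
`{(x, ξ, g) : g·(x, ξ) = (x, ξ) and 𝕁(x, ξ) = 0}`, i.e.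
`Crit(Φ) = {(x, ξ, g) ∈ (Ξ ∩ T*U) × G : g·(x, ξ) = (x, ξ)}` with `Ξ = 𝕁⁻¹(0)`.

We work in the chart with a group of linear isometries: `g` is an orthogonal matrix,
`𝔤` its Lie algebra of matrices (the `G`-directions at `g` being `t ↦ exp(tX)·g`),
`Φ(x, ξ, g) = (gx − x)·ξ`.  Criticality in `(x, ξ)` is the vanishing of the full Fréchet
derivative, criticality in the group variable is the vanishing of the derivative along all
one-parameter subgroups `exp(tX)g`, `X ∈ 𝔤`.  The lifted cotangent action of the
orthogonal matrix `g` on the fiber variable is `ξ ↦ (g⁻¹)ᵀ ξ = g ξ`, so the fixed-point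
condition `g·(x, ξ) = (x, ξ)` reads `g x = x ∧ g ξ = ξ`, and `𝕁(x, ξ) = 0` reads
`(X x)·ξ = 0` for all `X ∈ 𝔤`.
-/

section aux

variable {n : ℕ}

lemma dot_bb (n : ℕ) :
    IsBoundedBilinearMap ℝ (fun p : (Fin n → ℝ) × (Fin n → ℝ) => p.1 ⬝ᵥ p.2) where
  add_left x₁ x₂ y := add_dotProduct x₁ x₂ y
  smul_left c x y := smul_dotProduct c x y
  add_right x y₁ y₂ := dotProduct_add x y₁ y₂
  smul_right c x y := dotProduct_smul c x y
  bound := by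
    refine ⟨n + 1, by positivity, fun a b => ?_⟩
    calc ‖a ⬝ᵥ b‖ ≤ ∑ i, ‖a i * b i‖ := norm_sum_le _ _
    _ ≤ ∑ _i : Fin n, ‖a‖ * ‖b‖ := by
        refine Finset.sum_le_sum fun i _ => ?_
        rw [norm_mul]
        exact mul_le_mul (norm_le_pi_norm a i) (norm_le_pi_norm b i) (norm_nonneg _)
          (norm_nonneg _)
    _ = (n : ℝ) * ‖a‖ * ‖b‖ := by simp [mul_assoc]
    _ ≤ ((n : ℝ) + 1) * ‖a‖ * ‖b‖ := by
        have := norm_nonneg a; have := norm_nonneg b; nlinarith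

noncomputable def TT (g : Matrix (Fin n) (Fin n) ℝ) :
    ((Fin n → ℝ) × (Fin n → ℝ)) →L[ℝ] ((Fin n → ℝ) × (Fin n → ℝ)) :=
  (LinearMap.toContinuousLinearMap (g.mulVecLin - LinearMap.id)).prodMap
    (ContinuousLinearMap.id ℝ _)

lemma TT_apply (g : Matrix (Fin n) (Fin n) ℝ) (p : (Fin n → ℝ) × (Fin n → ℝ)) :
    TT g p = (g.mulVec p.1 - p.1, p.2) := rfl

lemma fderiv_phase (g : Matrix (Fin n) (Fin n) ℝ) (x ξ : Fin n → ℝ) :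
    fderiv ℝ (fun p : (Fin n → ℝ) × (Fin n → ℝ) => (g.mulVec p.1 - p.1) ⬝ᵥ p.2) (x, ξ)
      = (((dot_bb n).deriv (TT g (x, ξ))).comp (TT g)) := by
  have h : HasFDerivAt (fun p : (Fin n → ℝ) × (Fin n → ℝ) => (g.mulVec p.1 - p.1) ⬝ᵥ p.2)
      (((dot_bb n).deriv (TT g (x, ξ))).comp (TT g)) (x, ξ) := by
    have h1 := ((dot_bb n).hasFDerivAt (TT g (x, ξ))).comp (x, ξ) ((TT g).hasFDerivAt)
    exact h1
  exact h.fderiv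

lemma deriv_phase (X g : Matrix (Fin n) (Fin n) ℝ) (x ξ : Fin n → ℝ) :
    deriv (fun t : ℝ => (((NormedSpace.exp (t • X)) * g).mulVec x - x) ⬝ᵥ ξ) 0
      = (X.mulVec (g.mulVec x)) ⬝ᵥ ξ := by
  letI : SeminormedRing (Matrix (Fin n) (Fin n) ℝ) := Matrix.linftyOpSemiNormedRing
  letI : NormedRing (Matrix (Fin n) (Fin n) ℝ) := Matrix.linftyOpNormedRing
  letI : NormedAlgebra ℝ (Matrix (Fin n) (Fin n) ℝ) := Matrix.linftyOpNormedAlgebra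
  set y := g.mulVec x with hy
  have Llin : IsLinearMap ℝ (fun M : Matrix (Fin n) (Fin n) ℝ => (M.mulVec y) ⬝ᵥ ξ) := by
    constructor
    · intro A B; rw [Matrix.add_mulVec, add_dotProduct]
    · intro c A; rw [Matrix.smul_mulVec, smul_dotProduct]
  set L : Matrix (Fin n) (Fin n) ℝ →L[ℝ] ℝ := LinearMap.toContinuousLinearMap Llin.mk'
    with hL
  have h1 : HasDerivAt (fun t : ℝ => NormedSpace.exp (t • X)) X 0 := by
    have h0 := hasDerivAt_exp_smul_const (𝕂 := ℝ) X 0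
    simp [NormedSpace.exp_zero] at h0
    exact h0
  have h2 : HasDerivAt (fun t : ℝ => L (NormedSpace.exp (t • X))) (L X) 0 :=
    L.hasFDerivAt.comp_hasDerivAt 0 h1
  have h3 := h2.sub_const (x ⬝ᵥ ξ)
  have heq : (fun t : ℝ => (((NormedSpace.exp (t • X)) * g).mulVec x - x) ⬝ᵥ ξ)
      = fun t : ℝ => L (NormedSpace.exp (t • X)) - x ⬝ᵥ ξ := by
    funext t
    simp only [hL, LinearMap.coe_toContinuousLinearMap', IsLinearMap.mk'_apply]
    rw [sub_dotProduct, ← Matrix.mulVec_mulVec, hy]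
  rw [heq, h3.deriv]
  simp [hL]

end aux

theorem stmt10 (n : ℕ) (𝔤 : Set (Matrix (Fin n) (Fin n) ℝ))
    (g : Matrix (Fin n) (Fin n) ℝ) (hg : gᵀ * g = 1)
    (x ξ : Fin n → ℝ) :
    ((fderiv ℝ (fun p : (Fin n → ℝ) × (Fin n → ℝ) =>
          (g.mulVec p.1 - p.1) ⬝ᵥ p.2) (x, ξ) = 0)
      ∧ (∀ X ∈ 𝔤, deriv (fun t : ℝ =>
          (((NormedSpace.exp (t • X)) * g).mulVec x - x) ⬝ᵥ ξ) 0 = 0))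
    ↔ (g.mulVec x = x ∧ g.mulVec ξ = ξ ∧ ∀ X ∈ 𝔤, (X.mulVec x) ⬝ᵥ ξ = 0) := by
  have hg' : g * gᵀ = 1 := mul_eq_one_comm.mp hg
  have key : ∀ u : Fin n → ℝ, u ⬝ᵥ (gᵀ.mulVec ξ - ξ) = (g.mulVec u - u) ⬝ᵥ ξ := by
    intro u
    rw [dotProduct_sub, sub_dotProduct, Matrix.dotProduct_mulVec, Matrix.vecMul_transpose]
  have hfd : (fderiv ℝ (fun p : (Fin n → ℝ) × (Fin n → ℝ) =>
      (g.mulVec p.1 - p.1) ⬝ᵥ p.2) (x, ξ) = 0)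
      ↔ ∀ u v : Fin n → ℝ, (g.mulVec u - u) ⬝ᵥ ξ + (g.mulVec x - x) ⬝ᵥ v = 0 := by
    rw [fderiv_phase]
    constructor
    · intro h u v
      have h' := congrFun (congrArg DFunLike.coe h) (u, v)
      simp [IsBoundedBilinearMap.deriv_apply, TT_apply] at h'
      rw [sub_dotProduct, sub_dotProduct]
      linarith
    · intro h
      apply ContinuousLinearMap.ext
      rintro ⟨u, v⟩
      have h' := h u v
      simp [IsBoundedBilinearMap.deriv_apply, TT_apply]
      rw [sub_dotProduct, sub_dotProduct] at h'
      linarith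
  constructor
  · rintro ⟨h1, h2⟩
    rw [hfd] at h1
    have hx : g.mulVec x = x := by
      have h1' : ∀ v, (g.mulVec x - x) ⬝ᵥ v = 0 := by
        intro v; have := h1 0 v; simpa using this
      have hz : ∀ i, (g.mulVec x - x) i = 0 := by
        intro i
        have := h1' (Pi.single i 1)
        simpa [dotProduct_single] using this
      exact sub_eq_zero.mp (funext hz)
    have hxi : g.mulVec ξ = ξ := by
      have ht : gᵀ.mulVec ξ = ξ := by
        have hz : ∀ i, (gᵀ.mulVec ξ - ξ) i = 0 := by
          intro i
          have hu := h1 (Pi.single i 1) 0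
          rw [← key] at hu
          simpa [single_dotProduct] using hu
        exact sub_eq_zero.mp (funext hz)
      calc g.mulVec ξ = g.mulVec (gᵀ.mulVec ξ) := by rw [ht]
      _ = (g * gᵀ).mulVec ξ := by rw [Matrix.mulVec_mulVec]
      _ = ξ := by rw [hg', Matrix.one_mulVec]
    refine ⟨hx, hxi, fun X hX => ?_⟩
    have hd := h2 X hX
    rw [deriv_phase, hx] at hd
    exact hd
  · rintro ⟨hx, hxi, hJ⟩
    have hxt : gᵀ.mulVec ξ = ξ := by
      calc gᵀ.mulVec ξ = gᵀ.mulVec (g.mulVec ξ) := by rw [hxi]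
      _ = (gᵀ * g).mulVec ξ := by rw [Matrix.mulVec_mulVec]
      _ = ξ := by rw [hg, Matrix.one_mulVec]
    constructor
    · rw [hfd]
      intro u v
      have e1 : (g.mulVec u - u) ⬝ᵥ ξ = 0 := by
        rw [← key, hxt, sub_self, dotProduct_zero]
      rw [e1, hx, sub_self, zero_dotProduct, add_zero]
    · intro X hX
      rw [deriv_phase, hx]
      exact hJ X hX
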